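/- Let K be a compact topological space, u : K → ℝ upper semicontinuous, v : K → ℝ lower semicontinuous with v > 0 on K, and suppose u(x₀) > 0 for some x₀ ∈ K. Define τ = inf{ t ∈ ℝ : u(x) < t·v(x) for all x ∈ K }. Then τ is well defined and finite, τ > 0, u(x) ≤ τ·v(x) for all x ∈ K, and there exists a point x̄ ∈ K with u(x̄) = τ·v(x̄). -/
import Mathlib

/-- For a positive slope `s`, the set where `u < s * v` is open. -/
lemma sliding_open {K : Type*} [TopologicalSpace K]
    (u v : K → ℝ) (hu : UpperSemicontinuous u) (hv : LowerSemicontinuous v)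
    {s : ℝ} (hs : 0 < s) : IsOpen {y : K | u y < s * v y} := by
  rw [isOpen_iff_mem_nhds]
  intro x hx
  have hx' : u x < s * v x := hx
  obtain ⟨c, hc1, hc2⟩ := exists_between hx'
  have h2 : c / s < v x := by rw [div_lt_iff₀ hs]; linarith [hc2]
  filter_upwards [hu x c hc1, hv x (c / s) h2] with y hy1 hy2
  have : s * (c / s) < s * v y := mul_lt_mul_of_pos_left hy2 hs
  calc u y < c := hy1
    _ = s * (c / s) := by field_simp
    _ < s * v y := this

/-- From a pointwise choice of positive slopes, compactness yields a uniform slope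
which is one of the chosen slopes. -/
lemma sliding_uniform {K : Type*} [TopologicalSpace K] [CompactSpace K] [Nonempty K]
    (u v : K → ℝ) (hu : UpperSemicontinuous u) (hv : LowerSemicontinuous v)
    (hvpos : ∀ x, 0 < v x) (t : K → ℝ) (ht : ∀ x, 0 < t x)
    (hcov : ∀ x, u x < t x * v x) :
    ∃ s : ℝ, (∀ x, u x < s * v x) ∧ ∃ i : K, s = t i := by
  have hopen : ∀ x : K, IsOpen {y : K | u y < t x * v y} := fun x =>
    sliding_open u v hu hv (ht x)
  have hcover : (Set.univ : Set K) ⊆ ⋃ x, {y : K | u y < t x * v y} := by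
    intro y _
    exact Set.mem_iUnion.2 ⟨y, hcov y⟩
  obtain ⟨F, hF⟩ := isCompact_univ.elim_finite_subcover _ hopen hcover
  have hFne : F.Nonempty := by
    rcases hF (Set.mem_univ (Classical.arbitrary K)) with hy
    simp only [Set.mem_iUnion, exists_prop] at hy
    obtain ⟨i, hi, _⟩ := hy
    exact ⟨i, hi⟩
  refine ⟨F.sup' hFne t, ?_, ?_⟩
  · intro y
    rcases hF (Set.mem_univ y) with hy
    simp only [Set.mem_iUnion, exists_prop] at hy
    obtain ⟨i, hiF, hi⟩ := hy
    have h1 : t i ≤ F.sup' hFne t := Finset.le_sup' t hiF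
    calc u y < t i * v y := hi
      _ ≤ F.sup' hFne t * v y :=
        mul_le_mul_of_nonneg_right h1 (le_of_lt (hvpos y))
  · obtain ⟨i, _, hi⟩ := Finset.exists_mem_eq_sup' hFne t
    exact ⟨i, hi⟩

/-- The sliding lemma: the least t with u < t·v everywhere gives a touching point. -/
theorem sliding_lemma {K : Type*} [TopologicalSpace K] [CompactSpace K]
    (u v : K → ℝ) (hu : UpperSemicontinuous u) (hv : LowerSemicontinuous v)
    (hvpos : ∀ x, 0 < v x) (x₀ : K) (hx₀ : 0 < u x₀) :
    let S : Set ℝ := { t : ℝ | ∀ x, u x < t * v x }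
    let τ : ℝ := sInf S
    S.Nonempty ∧ BddBelow S ∧ 0 < τ ∧ (∀ x, u x ≤ τ * v x) ∧
      ∃ x, u x = τ * v x := by
  intro S τ
  have : Nonempty K := ⟨x₀⟩
  -- S is nonempty
  have hne : S.Nonempty := by
    set t : K → ℝ := fun x => max (u x / v x) 0 + 1 with ht_def
    have ht : ∀ x, 0 < t x := fun x => by positivity
    have hcov : ∀ x, u x < t x * v x := by
      intro x
      rw [← div_lt_iff₀ (hvpos x)]
      have : u x / v x ≤ max (u x / v x) 0 := le_max_left _ _
      simp only [ht_def]; linarith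
    obtain ⟨s, hs, -⟩ := sliding_uniform u v hu hv hvpos t ht hcov
    exact ⟨s, hs⟩
  -- every u x / v x is a lower bound of S
  have hlb : ∀ x : K, u x / v x ∈ lowerBounds S := by
    intro x r hr
    have := hr x
    exact le_of_lt ((div_lt_iff₀ (hvpos x)).2 this)
  have hbdd : BddBelow S := ⟨u x₀ / v x₀, hlb x₀⟩
  have hτ_ge : ∀ x : K, u x / v x ≤ τ := fun x => le_csInf hne (fun r hr => hlb x hr)
  have hτ_pos : 0 < τ :=
    lt_of_lt_of_le (div_pos hx₀ (hvpos x₀)) (hτ_ge x₀)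
  have hle : ∀ x, u x ≤ τ * v x := by
    intro x
    have := hτ_ge x
    rw [div_le_iff₀ (hvpos x)] at this
    linarith [this]
  refine ⟨hne, hbdd, hτ_pos, hle, ?_⟩
  -- touching point
  by_contra h
  push_neg at h
  have hstrict : ∀ x, u x < τ * v x := fun x => lt_of_le_of_ne (hle x) (h x)
  -- choose, for each x, a slope strictly between max (u x / v x) (τ/2) and τ
  have hchoice : ∀ x : K, ∃ s : ℝ, max (u x / v x) (τ / 2) < s ∧ s < τ := by
    intro x
    apply exists_between
    rw [max_lt_iff]
    constructor
    · rw [div_lt_iff₀ (hvpos x)]; exact hstrict x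
    · linarith
  choose t ht1 ht2 using hchoice
  have htpos : ∀ x, 0 < t x := fun x =>
    lt_trans (by linarith : (0:ℝ) < τ / 2) (lt_of_le_of_lt (le_max_right _ _) (ht1 x))
  have hcov : ∀ x, u x < t x * v x := by
    intro x
    rw [← div_lt_iff₀ (hvpos x)]
    exact lt_of_le_of_lt (le_max_left _ _) (ht1 x)
  obtain ⟨s, hs, i, hi⟩ := sliding_uniform u v hu hv hvpos t htpos hcov
  have hsS : s ∈ S := hs
  have : τ ≤ s := csInf_le hbdd hsS
  rw [hi] at this
  exact absurd this (not_le.2 (ht2 i))
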